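/- Let (L, ≤) be a finite partially ordered type (arising as the reachability order of a target diagram, so that ℓ can be matched with ℓ' iff ℓ ≤ ℓ'), and let C and T be multisets over L of the same cardinality. Let S_C and S_T denote the finite sets of elements occurring in C and T respectively. Call a subset R of S_T right-closed if for all ℓ ∈ R and ℓ' ∈ S_T with ℓ ≤ ℓ', also ℓ' ∈ R. For a right-closed R ⊆ S_T, let M(R) = {ℓ ∈ S_C : there is no ℓ' ∈ S_T \ R with ℓ ≤ ℓ'}, let X(R) be the sum over ℓ ∈ M(R) of the multiplicity of ℓ in C, and let T(R) be the sum over ℓ ∈ R of the multiplicity of ℓ in T. Then Multiset.Rel (· ≤ ·) C T holds (i.e., there is a perfect matching pairing each element of C with an element of T that it can be matched with) if and only if X(R) ≤ T(R) for every right-closed subset R of S_T. (Matching criterion via right-closed cuts, proved using Hall's marriage theorem, underlying the automatic verification of the defective 3-coloring fixed point.) -/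
import Mathlib

open Finset

/-- Sum of multiplicities over the support restricted to a predicate equals the cardinality
of the filtered multiset. -/
private lemma sum_count_filter_eq {L : Type*} [DecidableEq L] (C : Multiset L)
    (P : L → Prop) [DecidablePred P] :
    ∑ ℓ ∈ C.toFinset.filter P, C.count ℓ = Multiset.card (C.filter P) := by
  rw [← Multiset.toFinset_sum_count_eq (C.filter P), Multiset.toFinset_filter]
  refine Finset.sum_congr rfl ?_
  intro a ha
  rw [Finset.mem_filter] at ha
  rw [Multiset.count_filter, if_pos ha.2]

/-- Monotonicity of compatible filters along a `Multiset.Rel`. -/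
private lemma rel_filter_card_le {L : Type*} {r : L → L → Prop} {C T : Multiset L}
    (h : Multiset.Rel r C T) (P Q : L → Prop) [DecidablePred P] [DecidablePred Q]
    (hPQ : ∀ a b, r a b → P a → Q b) :
    Multiset.card (C.filter P) ≤ Multiset.card (T.filter Q) := by
  induction h with
  | zero => simp
  | @cons a b C' T' hab h ih =>
    by_cases hP : P a
    · rw [Multiset.filter_cons_of_pos _ hP, Multiset.filter_cons_of_pos _ (hPQ a b hab hP)]
      simpa using ih
    · rw [Multiset.filter_cons_of_neg _ hP]
      by_cases hQ : Q b
      · rw [Multiset.filter_cons_of_pos _ hQ, Multiset.card_cons]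
        omega
      · rw [Multiset.filter_cons_of_neg _ hQ]
        exact ih

/-- Every multiset is the image of a function on `Fin n`. -/
private lemma exists_fin_rep {L : Type*} (M : Multiset L) (n : ℕ)
    (hn : Multiset.card M = n) :
    ∃ f : Fin n → L, M = Multiset.map f Finset.univ.val := by
  have hlen : n = M.toList.length := by simp [hn]
  refine ⟨M.toList.get ∘ (finCongr hlen), ?_⟩
  have h1 : Multiset.map (⇑(finCongr hlen)) Finset.univ.val = Finset.univ.val := by
    have h := congrArg Finset.val (Finset.map_univ_equiv (finCongr hlen))
    rwa [Finset.map_val] at h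
  rw [← Multiset.map_map, h1, Fin.univ_val_map, List.ofFn_get, Multiset.coe_toList]

private lemma card_filter_map_univ {L : Type*} {n : ℕ} (f : Fin n → L)
    (P : L → Prop) [DecidablePred P] :
    Multiset.card ((Multiset.map f Finset.univ.val).filter P)
      = (Finset.univ.filter (fun i => P (f i))).card := by
  rw [Multiset.filter_map, Multiset.card_map]
  rfl

/-- Matching criterion via right-closed cuts (via Hall's marriage theorem): for multisets
`C`, `T` of equal cardinality over a finite partially ordered type `L`,
`Multiset.Rel (· ≤ ·) C T` holds (each element of `C` can be matched bijectively with an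
element of `T` above it) if and only if for every right-closed subset `R` of the support of
`T`, the total multiplicity `X(R)` in `C` of the elements that can only be matched into `R`
is at most the total multiplicity `T(R)` in `T` of the elements of `R`. -/
theorem matching_iff_rightClosed_cuts {L : Type*} [PartialOrder L] [Fintype L]
    [DecidableEq L] [DecidableRel ((· ≤ ·) : L → L → Prop)]
    (C T : Multiset L) (hcard : Multiset.card C = Multiset.card T) :
    Multiset.Rel (· ≤ ·) C T ↔
      ∀ R : Finset L, R ⊆ T.toFinset →
        (∀ ℓ ∈ R, ∀ ℓ' ∈ T.toFinset, ℓ ≤ ℓ' → ℓ' ∈ R) →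
        (∑ ℓ ∈ C.toFinset.filter (fun ℓ => ¬ ∃ ℓ' ∈ T.toFinset \ R, ℓ ≤ ℓ'),
            C.count ℓ) ≤
          ∑ ℓ ∈ R, T.count ℓ := by
  constructor
  · -- Forward direction: a matching bounds every right-closed cut.
    intro h R hRsub hRclosed
    have key := rel_filter_card_le h
      (fun ℓ => ¬ ∃ ℓ' ∈ T.toFinset \ R, ℓ ≤ ℓ')
      (fun ℓ => ℓ ∉ T.toFinset ∨ ℓ ∈ R) ?_
    · rw [sum_count_filter_eq]
      have hfilt : T.filter (fun ℓ => ℓ ∉ T.toFinset ∨ ℓ ∈ R) = T.filter (· ∈ R) := by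
        refine Multiset.filter_congr ?_
        intro x hx
        simp [Multiset.mem_toFinset.mpr hx]
      have hRfix : T.toFinset.filter (· ∈ R) = R := by
        ext a
        simp only [Finset.mem_filter]
        exact ⟨fun h => h.2, fun h => ⟨hRsub h, h⟩⟩
      have hsum : ∑ ℓ ∈ R, T.count ℓ = Multiset.card (T.filter (· ∈ R)) := by
        conv_lhs => rw [← hRfix]
        exact sum_count_filter_eq T (· ∈ R)
      rw [hsum, ← hfilt]
      exact key
    · intro a b hab hPa
      by_cases hb : b ∈ T.toFinset
      · right
        by_contra hbR
        exact hPa ⟨b, Finset.mem_sdiff.mpr ⟨hb, hbR⟩, hab⟩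
      · left; exact hb
  · -- Backward direction: the cut condition implies Hall's condition, hence a matching.
    intro hcut
    obtain ⟨n, hn⟩ : ∃ n, Multiset.card T = n := ⟨_, rfl⟩
    obtain ⟨fT, hTr⟩ := exists_fin_rep T n hn
    obtain ⟨fC, hCr⟩ := exists_fin_rep C n ((hcard.trans hn))
    subst hTr hCr
    set T := Multiset.map fT Finset.univ.val with hT
    set C := Multiset.map fC Finset.univ.val with hC
    -- neighborhood function
    set t : Fin n → Finset (Fin n) :=
      fun i => Finset.univ.filter (fun j => fC i ≤ fT j) with ht
    have hall : ∀ s : Finset (Fin n), s.card ≤ (s.biUnion t).card := by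
      intro s
      set A : Finset L := s.image fC with hA
      set R : Finset L := T.toFinset.filter (fun ℓ' => ∃ ℓ ∈ A, ℓ ≤ ℓ') with hR
      have hRsub : R ⊆ T.toFinset := Finset.filter_subset _ _
      have hRclosed : ∀ ℓ ∈ R, ∀ ℓ' ∈ T.toFinset, ℓ ≤ ℓ' → ℓ' ∈ R := by
        intro ℓ hℓ ℓ' hℓ' hle
        rw [hR, Finset.mem_filter] at hℓ ⊢
        obtain ⟨-, ℓ₀, hℓ₀, hle₀⟩ := hℓ
        exact ⟨hℓ', ℓ₀, hℓ₀, le_trans hle₀ hle⟩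
      have key := hcut R hRsub hRclosed
      -- s.card ≤ X(R)
      have h1 : s.card ≤ ∑ ℓ ∈ C.toFinset.filter
          (fun ℓ => ¬ ∃ ℓ' ∈ T.toFinset \ R, ℓ ≤ ℓ'), C.count ℓ := by
        have hsub : s ⊆ Finset.univ.filter (fun i => fC i ∈ A) := by
          intro i hi
          exact Finset.mem_filter.mpr ⟨Finset.mem_univ _, Finset.mem_image_of_mem _ hi⟩
        have h2 : s.card ≤ (Finset.univ.filter (fun i => fC i ∈ A)).card :=
          Finset.card_le_card hsub
        have h3 : (Finset.univ.filter (fun i => fC i ∈ A)).card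
            = ∑ ℓ ∈ C.toFinset.filter (· ∈ A), C.count ℓ := by
          rw [sum_count_filter_eq, hC, card_filter_map_univ]
        have h4 : C.toFinset.filter (· ∈ A) ⊆ C.toFinset.filter
            (fun ℓ => ¬ ∃ ℓ' ∈ T.toFinset \ R, ℓ ≤ ℓ') := by
          intro ℓ hℓ
          rw [Finset.mem_filter] at hℓ ⊢
          refine ⟨hℓ.1, ?_⟩
          rintro ⟨ℓ', hℓ', hle⟩
          rw [Finset.mem_sdiff] at hℓ'
          exact hℓ'.2 (Finset.mem_filter.mpr ⟨hℓ'.1, ℓ, hℓ.2, hle⟩)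
        calc s.card ≤ _ := h2
          _ = _ := h3
          _ ≤ _ := Finset.sum_le_sum_of_subset h4
      -- T(R) ≤ card of the biUnion
      have h5 : ∑ ℓ ∈ R, T.count ℓ ≤ (s.biUnion t).card := by
        have hRfix : T.toFinset.filter (· ∈ R) = R := by
          ext a
          simp only [Finset.mem_filter]
          exact ⟨fun h => h.2, fun h => ⟨hRsub h, h⟩⟩
        have h6 : ∑ ℓ ∈ R, T.count ℓ = Multiset.card (T.filter (· ∈ R)) := by
          conv_lhs => rw [← hRfix]
          exact sum_count_filter_eq T (· ∈ R)
        have h7 : Multiset.card (T.filter (· ∈ R))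
            = (Finset.univ.filter (fun j => fT j ∈ R)).card := by
          rw [hT, card_filter_map_univ]
        have h8 : Finset.univ.filter (fun j => fT j ∈ R) ⊆ s.biUnion t := by
          intro j hj
          rw [Finset.mem_filter, hR, Finset.mem_filter] at hj
          obtain ⟨-, -, ℓ, hℓA, hle⟩ := hj
          rw [hA] at hℓA
          obtain ⟨i, hi, rfl⟩ := Finset.mem_image.mp hℓA
          exact Finset.mem_biUnion.mpr ⟨i, hi,
            Finset.mem_filter.mpr ⟨Finset.mem_univ _, hle⟩⟩
        rw [h6, h7]
        exact Finset.card_le_card h8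
      exact h1.trans (key.trans h5)
    obtain ⟨f, hfinj, hf⟩ := (Finset.all_card_le_biUnion_card_iff_exists_injective t).mp hall
    have hfbij : Function.Bijective f := Finite.injective_iff_bijective.mp hfinj
    have hle : ∀ i, fC i ≤ fT (f i) := by
      intro i
      have := hf i
      rw [ht, Finset.mem_filter] at this
      exact this.2
    have hmapf : Multiset.map f Finset.univ.val = Finset.univ.val := by
      have h := congrArg Finset.val (Finset.map_univ_equiv (Equiv.ofBijective f hfbij))
      rwa [Finset.map_val] at h
    have hTswap : Multiset.map (fun i => fT (f i)) Finset.univ.val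
        = Multiset.map fT Finset.univ.val := by
      conv_rhs => rw [← hmapf]
      rw [Multiset.map_map]
      rfl
    rw [hC, hT, ← hTswap, Multiset.rel_map]
    exact Multiset.rel_refl_of_refl_on (fun i _ => hle i)
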